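/- arXiv:1106.5288 — 7 statements merged into one kernel-verified Lean document; each statement's English description precedes it below -/
import Mathlib

section
/- The relation → on almost malnormal collections of infinite subgroups of a group G, defined by 𝓚 → 𝓗 iff every member of 𝓚 is contained in some member of 𝓗, is reflexive, transitive, and antisymmetric; i.e., it is a partial order. -/
open scoped Pointwise

/-- The conjugate subgroup `g H g⁻¹`. -/
def conjSub {G : Type*} [Group G] (g : G) (H : Subgroup G) : Subgroup G :=
  H.map (MulAut.conj g).toMonoidHom

/-- A collection of subgroups is almost malnormal if all members are infinite,
any two distinct members intersect in a finite set, and every member equals its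
normalizer. -/
def AMColl {G : Type*} [Group G] (S : Set (Subgroup G)) : Prop :=
  (∀ H ∈ S, (H : Set G).Infinite) ∧
  (∀ H₁ ∈ S, ∀ H₂ ∈ S, H₁ ≠ H₂ → ((H₁ : Set G) ∩ (H₂ : Set G)).Finite) ∧
  (∀ H ∈ S, Subgroup.normalizer (H : Set G) = H)

/-- Conjugacy invariance of a collection of subgroups. -/
def ConjInv {G : Type*} [Group G] (S : Set (Subgroup G)) : Prop :=
  ∀ H ∈ S, ∀ g : G, conjSub g H ∈ S

/-- `BlowRel 𝓚 𝓗` (written `𝓚 → 𝓗` in the paper): every member of `𝓚` is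
contained in some member of `𝓗`. -/
def BlowRel {G : Type*} [Group G] (K H : Set (Subgroup G)) : Prop :=
  ∀ P ∈ K, ∃ Q ∈ H, P ≤ Q

theorem stmt_1 {G : Type*} [Group G] :
    (∀ 𝓗 : Set (Subgroup G), AMColl 𝓗 → BlowRel 𝓗 𝓗) ∧
    (∀ 𝓚 𝓗 𝓛 : Set (Subgroup G), AMColl 𝓚 → AMColl 𝓗 → AMColl 𝓛 →
      BlowRel 𝓚 𝓗 → BlowRel 𝓗 𝓛 → BlowRel 𝓚 𝓛) ∧
    (∀ 𝓚 𝓗 : Set (Subgroup G), AMColl 𝓚 → AMColl 𝓗 →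
      BlowRel 𝓚 𝓗 → BlowRel 𝓗 𝓚 → 𝓚 = 𝓗) := by
  have key : ∀ (S : Set (Subgroup G)), AMColl S → ∀ P ∈ S, ∀ P' ∈ S, P ≤ P' → P = P' := by
    intro S hS P hP P' hP' hle
    by_contra hne
    have hfin := hS.2.1 P hP P' hP' hne
    have : ((P : Set G) ∩ (P' : Set G)) = (P : Set G) := by
      apply Set.inter_eq_self_of_subset_left
      exact fun x hx => hle hx
    rw [this] at hfin
    exact (hS.1 P hP) hfin
  refine ⟨fun 𝓗 _ P hP => ⟨P, hP, le_refl P⟩,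
    fun 𝓚 𝓗 𝓛 _ _ _ h1 h2 P hP => ?_,
    fun 𝓚 𝓗 hK hH h1 h2 => ?_⟩
  · obtain ⟨Q, hQ, hPQ⟩ := h1 P hP
    obtain ⟨R, hR, hQR⟩ := h2 Q hQ
    exact ⟨R, hR, hPQ.trans hQR⟩
  · ext P
    constructor
    · intro hP
      obtain ⟨Q, hQ, hPQ⟩ := h1 P hP
      obtain ⟨P', hP', hQP'⟩ := h2 Q hQ
      have hPP' : P = P' := key 𝓚 hK P hP P' hP' (hPQ.trans hQP')
      have : Q = P := le_antisymm (hPP' ▸ hQP') hPQ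
      exact this ▸ hQ
    · intro hQ
      obtain ⟨R, hR, hQR⟩ := h2 P hQ
      obtain ⟨Q', hQ', hRQ'⟩ := h1 R hR
      have hPQ' : P = Q' := key 𝓗 hH P hQ Q' hQ' (hQR.trans hRQ')
      have : R = P := le_antisymm (hPQ' ▸ hRQ') hQR
      exact this ▸ hR
end

section
/- Let L be a group and M an infinite subgroup of L such that the virtual normalizer V_L(M) is virtually infinite cyclic. Then V_L(V_L(M)) = V_L(M). -/
open scoped Pointwise

/-- The virtual normalizer (commensurator) of a subgroup `M` of `L`:
all `g ∈ L` such that `M ∩ gMg⁻¹` has finite index in both `M` and `gMg⁻¹`. -/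
def virtNormalizer {L : Type*} [Group L] (M : Subgroup L) : Subgroup L :=
  Subgroup.Commensurable.commensurator M

/-- A group is virtually infinite cyclic if it contains an element of infinite
order whose cyclic subgroup has finite index. -/
def VirtuallyInfCyclic (G : Type*) [Group G] : Prop :=
  ∃ g : G, ¬ IsOfFinOrder g ∧ (Subgroup.zpowers g).FiniteIndex


lemma myInfinite_of_finiteIndex {Γ : Type*} [Group Γ] [Infinite Γ] (S : Subgroup Γ)
    [S.FiniteIndex] : Infinite S := by
  have h := Subgroup.card_mul_index S
  rw [show Nat.card Γ = 0 from Nat.card_eq_zero_of_infinite] at h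
  rcases Nat.mul_eq_zero.mp h with h0 | h0
  · rcases Nat.card_eq_zero.mp h0 with h1 | h1
    · exact (h1.elim (1 : S))
    · exact h1
  · exact absurd h0 Subgroup.FiniteIndex.index_ne_zero

lemma myRelindex_ne_zero {G : Type*} [Group G] {g : G} (hg : ¬ IsOfFinOrder g) {n : ℤ}
    (hn : n ≠ 0) : (Subgroup.zpowers (g ^ n)).relIndex (Subgroup.zpowers g) ≠ 0 := by
  have hinj : Function.Injective (fun k : ℤ => g ^ k) :=
    injective_zpow_iff_not_isOfFinOrder.mpr hg
  have hrange : (zpowersHom G g).range = Subgroup.zpowers g := by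
    ext x
    simp only [MonoidHom.mem_range, Subgroup.mem_zpowers_iff, zpowersHom_apply]
    exact ⟨fun ⟨m, hm⟩ => ⟨Multiplicative.toAdd m, hm⟩,
      fun ⟨k, hk⟩ => ⟨Multiplicative.ofAdd k, hk⟩⟩
  have hcomap : (Subgroup.zpowers (g ^ n)).comap (zpowersHom G g) =
      AddSubgroup.toSubgroup (AddSubgroup.zmultiples n) := by
    ext k
    show (∃ m : ℤ, (g ^ n) ^ m = g ^ Multiplicative.toAdd k) ↔
      Multiplicative.toAdd k ∈ AddSubgroup.zmultiples n
    constructor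
    · rintro ⟨m, hm⟩
      rw [← zpow_mul] at hm
      have h2 := hinj hm
      exact AddSubgroup.mem_zmultiples_iff.mpr ⟨m, by rw [smul_eq_mul, mul_comm]; exact h2⟩
    · intro hk
      obtain ⟨m, hm⟩ := AddSubgroup.mem_zmultiples_iff.mp hk
      exact ⟨m, by rw [← zpow_mul]; congr 1; rw [← hm, smul_eq_mul, mul_comm]⟩
  rw [← hrange, ← Subgroup.index_comap, hcomap, AddSubgroup.index_toSubgroup,
    Int.index_zmultiples]
  simpa using hn

/-- An infinite subgroup of a virtually infinite cyclic group has finite index. -/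
lemma myFiniteIndex_of_infinite {G : Type*} [Group G]
    (h : ∃ g : G, ¬ IsOfFinOrder g ∧ (Subgroup.zpowers g).FiniteIndex)
    {K : Subgroup G} (hK : Infinite K) : K.FiniteIndex := by
  obtain ⟨g, hg, hfi⟩ := h
  haveI := hK
  haveI := hfi
  haveI : Infinite G := Infinite.of_injective _ (Subtype.val_injective (p := (· ∈ K)))
  haveI : Infinite ((Subgroup.zpowers g).subgroupOf K) := myInfinite_of_finiteIndex _
  obtain ⟨y, hy⟩ := exists_ne (1 : ((Subgroup.zpowers g).subgroupOf K))
  obtain ⟨n, hn⟩ := Subgroup.mem_subgroupOf.mp y.2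
  have hn0 : n ≠ 0 := by
    rintro rfl
    have h1 : ((y : K) : G) = 1 := by rw [← hn]; simp
    exact hy (Subtype.ext (Subtype.ext h1))
  have hn' : g ^ n = ((y : K) : G) := hn
  have hmem : g ^ n ∈ K := hn' ▸ (y : K).2
  have hle : Subgroup.zpowers (g ^ n) ≤ K := Subgroup.zpowers_le.mpr hmem
  have hle2 : Subgroup.zpowers (g ^ n) ≤ Subgroup.zpowers g :=
    Subgroup.zpowers_le.mpr (Subgroup.zpow_mem_zpowers g n)
  have hidx : (Subgroup.zpowers (g ^ n)).index ≠ 0 := by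
    rw [← Subgroup.relIndex_mul_index hle2]
    exact Nat.mul_ne_zero (myRelindex_ne_zero hg hn0) hfi.index_ne_zero
  exact @Subgroup.finiteIndex_of_le _ _ _ _ ⟨hidx⟩ hle


theorem stmt_4 {L : Type*} [Group L] (M : Subgroup L)
    (hM : (M : Set L).Infinite)
    (hvc : VirtuallyInfCyclic (virtNormalizer M)) :
    virtNormalizer (virtNormalizer M) = virtNormalizer M := by
  have hMV : M ≤ virtNormalizer M := by
    intro g hgM
    show Subgroup.Commensurable (ConjAct.toConjAct g • M) M
    have hsmul : ConjAct.toConjAct g • M = M := by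
      ext a
      rw [Subgroup.mem_pointwise_smul_iff_inv_smul_mem, ConjAct.smul_def]
      simp only [map_inv, ConjAct.ofConjAct_toConjAct, inv_inv]
      constructor
      · intro h
        have := M.mul_mem (M.mul_mem hgM h) (M.inv_mem hgM)
        simpa [mul_assoc] using this
      · intro h
        exact M.mul_mem (M.mul_mem (M.inv_mem hgM) h) hgM
    rw [hsmul]
  haveI hMinf : Infinite M := hM.to_subtype
  haveI : Infinite (M.subgroupOf (virtNormalizer M)) :=
    Infinite.of_injective _ (Subgroup.subgroupOfEquivOfLe hMV).symm.injective
  have hfin : (M.subgroupOf (virtNormalizer M)).FiniteIndex :=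
    myFiniteIndex_of_infinite hvc this
  have hcomm : Subgroup.Commensurable M (virtNormalizer M) := by
    constructor
    · exact hfin.index_ne_zero
    · have : (virtNormalizer M).relIndex M = 1 := by
        rw [← Subgroup.inf_relIndex_right, inf_eq_right.mpr hMV, Subgroup.relIndex_self]
      simp [this]
  exact (Subgroup.Commensurable.eq hcomm).symm
end

section
/- Let L be a group and M an infinite subgroup of L such that the virtual normalizer V_L(M) is virtually infinite cyclic. Then V_L(M) is an almost malnormal subgroup of L: for every l ∈ L not in V_L(M), the intersection V_L(M) ∩ l·V_L(M)·l⁻¹ is finite. -/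
open scoped Pointwise

open Subgroup

lemma aux_relIndex_zpow {G : Type*} [Group G] (g : G) (hg : ¬IsOfFinOrder g)
    (n : ℤ) (hn : n ≠ 0) : (zpowers (g ^ n)).relIndex (zpowers g) ≠ 0 := by
  set f := zpowersHom G g with hf
  have hinj : Function.Injective f := by
    have h2 := injective_zpow_iff_not_isOfFinOrder.2 hg
    intro a b hab
    exact Multiplicative.toAdd.injective (h2 (by simpa [f] using hab))
  have hmapn : (zpowers (Multiplicative.ofAdd n)).map f = zpowers (g ^ n) := by
    rw [MonoidHom.map_zpowers]; simp [f]
  have hmap1 : (zpowers (Multiplicative.ofAdd (1 : ℤ))).map f = zpowers g := by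
    rw [MonoidHom.map_zpowers]; simp [f]
  have key := relIndex_comap (zpowers (g ^ n)) f (zpowers (Multiplicative.ofAdd (1 : ℤ)))
  rw [hmap1] at key
  rw [← key]
  have hcomap : (zpowers (g ^ n)).comap f = zpowers (Multiplicative.ofAdd n) := by
    rw [← hmapn, comap_map_eq_self_of_injective hinj]
  rw [hcomap]
  have htop : zpowers (Multiplicative.ofAdd (1 : ℤ)) = ⊤ := by
    ext x
    simp only [mem_top, iff_true, mem_zpowers_iff]
    exact ⟨Multiplicative.toAdd x, by
      apply Multiplicative.toAdd.injective; rw [toAdd_zpow, toAdd_ofAdd]; simp⟩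
  have hzm : zpowers (Multiplicative.ofAdd n)
      = AddSubgroup.toSubgroup (AddSubgroup.zmultiples n) := by
    ext x
    show (x ∈ zpowers (Multiplicative.ofAdd n)) ↔
      (Multiplicative.toAdd x ∈ AddSubgroup.zmultiples n)
    rw [mem_zpowers_iff, AddSubgroup.mem_zmultiples_iff]
    constructor
    · rintro ⟨k, rfl⟩; exact ⟨k, by rw [toAdd_zpow, toAdd_ofAdd]⟩
    · rintro ⟨k, hk⟩
      exact ⟨k, Multiplicative.toAdd.injective (by rw [toAdd_zpow, toAdd_ofAdd, hk])⟩
  rw [htop, relIndex_top_right, hzm, AddSubgroup.index_toSubgroup, Int.index_zmultiples]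
  simpa using hn

lemma aux_vic_index {G : Type*} [Group G] (hvc : VirtuallyInfCyclic G)
    (H : Subgroup G) (hH : (H : Set G).Infinite) : H.index ≠ 0 := by
  obtain ⟨g, hg, hfi⟩ := hvc
  set Z := zpowers g with hZ
  have hrel : Z.relIndex H ≠ 0 := fun h => hfi.1 (index_eq_zero_of_relIndex_eq_zero h)
  have hHinf : Infinite H := Set.infinite_coe_iff.mpr hH
  set S := Z.subgroupOf H with hS
  have hSinf : Infinite S := by
    have hcard : S.index * Nat.card S = Nat.card H := index_mul_card S
    have : Nat.card H = 0 := Nat.card_eq_zero_of_infinite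
    rw [this, Nat.mul_eq_zero] at hcard
    rcases hcard with h | h
    · exact absurd h hrel
    · rcases Nat.card_eq_zero.mp h with h' | h'
      · exact (h'.false (1 : S)).elim
      · exact h'
  obtain ⟨x, hx1⟩ := exists_ne (1 : S)
  have hxZ : ((x : H) : G) ∈ Z := x.2
  obtain ⟨n, hn⟩ := mem_zpowers_iff.mp hxZ
  have hxne : ((x : H) : G) ≠ 1 := by
    intro h
    apply hx1
    ext
    exact h
  have hn0 : n ≠ 0 := by rintro rfl; exact hxne (by simpa using hn.symm)
  have hle1 : zpowers (g ^ n) ≤ H := by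
    rw [hn]
    exact zpowers_le.mpr (x : H).2
  have hle2 : zpowers (g ^ n) ≤ Z := zpowers_le.mpr (mem_zpowers_iff.mpr ⟨n, rfl⟩)
  have hidx : (zpowers (g ^ n)).index ≠ 0 := by
    rw [← relIndex_mul_index hle2]
    exact Nat.mul_ne_zero (aux_relIndex_zpow g hg n hn0) hfi.1
  exact ne_zero_of_dvd_ne_zero hidx (index_dvd_of_le hle1)

lemma aux_smul_eq_conjSub {G : Type*} [Group G] (g : G) (H : Subgroup G) :
    ConjAct.toConjAct g • H = conjSub g H := by
  ext x
  rw [Subgroup.mem_smul_pointwise_iff_exists]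
  constructor
  · rintro ⟨s, hs, rfl⟩
    exact ⟨s, hs, by simp [ConjAct.smul_def]⟩
  · rintro ⟨s, hs, rfl⟩
    exact ⟨s, hs, by simp [ConjAct.smul_def]⟩

lemma aux_relIndex_map {G : Type*} [Group G] (e : G ≃* G) (A B : Subgroup G) :
    (A.map e.toMonoidHom).relIndex (B.map e.toMonoidHom) = A.relIndex B := by
  rw [← relIndex_comap, comap_map_eq_self_of_injective e.injective]

theorem stmt_5 {L : Type*} [Group L] (M : Subgroup L)
    (hM : (M : Set L).Infinite)
    (hvc : VirtuallyInfCyclic (virtNormalizer M)) :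
    ∀ l : L, l ∉ virtNormalizer M →
      ((virtNormalizer M : Set L) ∩ (conjSub l (virtNormalizer M) : Set L)).Finite := by
  intro l hl
  by_contra hfin
  apply hl
  set V := virtNormalizer M with hV
  set W := conjSub l V with hW
  set K := V ⊓ W with hK
  have hKinf : (K : Set L).Infinite := by
    rw [hK, Subgroup.coe_inf]
    exact hfin
  -- key: infinite subgroups contained in V have nonzero relIndex in V
  have key : ∀ A : Subgroup L, (A : Set L).Infinite → A ≤ V → A.relIndex V ≠ 0 := by
    intro A hAinf hAle
    have hset : ((A.subgroupOf V : Subgroup V) : Set V).Infinite := by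
      have : ((A.subgroupOf V : Subgroup V) : Set V) = V.subtype ⁻¹' (A : Set L) := rfl
      rw [this]
      apply hAinf.preimage
      intro x hx
      exact ⟨⟨x, hAle hx⟩, rfl⟩
    exact aux_vic_index hvc (A.subgroupOf V) hset
  have h1 : K.relIndex V ≠ 0 := key K hKinf inf_le_left
  -- transport by the conjugation automorphism
  have h2 : K.relIndex W ≠ 0 := by
    set e := MulAut.conj l with he
    set A := K.comap e.toMonoidHom with hA
    have hWm : W = V.map e.toMonoidHom := rfl
    have hmapA : A.map e.toMonoidHom = K :=
      map_comap_eq_self_of_surjective e.surjective K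
    have hAV : A ≤ V := by
      intro x hx
      have : e x ∈ K := hx
      have h3 : e x ∈ W := this.2
      rw [hWm] at h3
      obtain ⟨y, hy, hxy⟩ := h3
      have : x = y := e.injective hxy.symm ▸ rfl
      · exact (e.injective hxy).symm ▸ hy
    have hAinf : (A : Set L).Infinite := by
      have : (A : Set L) = e.toMonoidHom ⁻¹' (K : Set L) := rfl
      rw [this]
      exact hKinf.preimage (fun x hx => ⟨e.symm x, by simp⟩)
    have := key A hAinf hAV
    rw [← aux_relIndex_map e A V, hmapA, ← hWm] at this
    exact this
  have hMle : M ≤ V := by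
    intro g hg
    refine (Commensurable.commensurator_mem_iff M g).2 ?_
    have : ConjAct.toConjAct g • M = M := by
      rw [aux_smul_eq_conjSub]
      ext x
      constructor
      · rintro ⟨s, hs, rfl⟩
        exact M.mul_mem (M.mul_mem hg hs) (M.inv_mem hg)
      · intro hx
        exact ⟨g⁻¹ * x * g, M.mul_mem (M.mul_mem (M.inv_mem hg) hx) hg, by
          simp [MulAut.conj_apply]; group⟩
    rw [this]
  have hVW : Commensurable V W := by
    constructor
    · rw [← inf_relIndex_right]
      exact h2
    · rw [← inf_relIndex_right, inf_comm]
      exact h1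
  have hMV : Commensurable M V := by
    constructor
    · exact key M hM hMle
    · rw [← inf_relIndex_right, inf_eq_right.mpr hMle, relIndex_self]
      exact one_ne_zero
  refine (Commensurable.commensurator_mem_iff M l).2 ?_
  have step1 : Commensurable (ConjAct.toConjAct l • M) (ConjAct.toConjAct l • V) :=
    (Commensurable.commensurable_conj (ConjAct.toConjAct l)).1 hMV
  rw [aux_smul_eq_conjSub] at step1
  exact (step1.trans hVW.symm).trans hMV.symm
end

section
/- Let M be an infinite subgroup of a group L. If g ∈ V_L(V_L(M)), i.e., V_L(M) ∩ gV_L(M)g⁻¹ has finite index in both V_L(M) and gV_L(M)g⁻¹, and M has finite index in V_L(M), then M ∩ gMg⁻¹ has finite index in both M and gMg⁻¹, so g ∈ V_L(M). -/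
open scoped Pointwise

lemma conjSub_eq_smul {G : Type*} [Group G] (g : G) (H : Subgroup G) :
    conjSub g H = ConjAct.toConjAct g • H := by
  ext x
  simp [conjSub, Subgroup.mem_pointwise_smul_iff_inv_smul_mem, ConjAct.smul_def,
    Subgroup.mem_map, MulAut.conj]
  constructor
  · rintro ⟨y, hy, rfl⟩; simpa [mul_assoc] using hy
  · intro h; exact ⟨g⁻¹ * x * g, h, by group⟩

lemma le_comm' {G : Type*} [Group G] (M : Subgroup G) :
    M ≤ Subgroup.Commensurable.commensurator M := by
  intro m hm
  rw [Subgroup.Commensurable.commensurator_mem_iff]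
  have : ConjAct.toConjAct m • M = M := by
    ext x
    rw [Subgroup.mem_pointwise_smul_iff_inv_smul_mem, ConjAct.smul_def]
    simp only [ConjAct.ofConjAct_inv, ConjAct.ofConjAct_toConjAct]
    constructor
    · intro h
      have := M.mul_mem (M.mul_mem hm h) (M.inv_mem hm)
      simpa [mul_assoc] using this
    · intro h
      have := M.mul_mem (M.mul_mem (M.inv_mem hm) h) hm
      simpa [mul_assoc] using this
  rw [this]

theorem stmt_6 {L : Type*} [Group L] (M : Subgroup L)
    (hM : (M : Set L).Infinite)
    (hfi : M.relIndex (virtNormalizer M) ≠ 0)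
    (g : L) (hg : g ∈ virtNormalizer (virtNormalizer M)) :
    (conjSub g M).relIndex M ≠ 0 ∧ M.relIndex (conjSub g M) ≠ 0 ∧
      g ∈ virtNormalizer M := by
  have hMV : Subgroup.Commensurable M (virtNormalizer M) :=
    ⟨hfi, Subgroup.relIndex_eq_one.mpr (le_comm' M) ▸ one_ne_zero⟩
  have hgV : Subgroup.Commensurable (ConjAct.toConjAct g • virtNormalizer M) (virtNormalizer M) :=
    (Subgroup.Commensurable.commensurator_mem_iff _ g).mp hg
  have h1 : Subgroup.Commensurable (ConjAct.toConjAct g • M) (ConjAct.toConjAct g • virtNormalizer M) :=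
    (Subgroup.Commensurable.commensurable_conj _).mp hMV
  have h2 : Subgroup.Commensurable (ConjAct.toConjAct g • M) M :=
    (h1.trans hgV).trans hMV.symm
  rw [← conjSub_eq_smul] at h2
  exact ⟨h2.1, h2.2, by rw [virtNormalizer, Subgroup.Commensurable.commensurator_mem_iff,
    ← conjSub_eq_smul]; exact h2⟩
end

section
/- Let 𝓚 and 𝓗 be almost malnormal conjugacy-invariant collections of infinite subgroups of a group G with 𝓚 → 𝓗 (every member of 𝓚 is contained in some member of 𝓗). Let {H_λ | λ ∈ Λ} be a set of representatives of conjugacy classes of 𝓗, and for each λ let {K_{λ,μ} | μ ∈ M_λ} be a set of representatives of the H_λ-conjugacy classes of the members of 𝓚 contained in H_λ. If g K_{λ,μ} g⁻¹ = K_{λ',μ'} for some g ∈ G, then λ = λ', μ = μ', and g ∈ K_{λ,μ}. -/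
open scoped Pointwise

lemma mem_conjSub {G : Type*} [Group G] {g x : G} {H : Subgroup G} :
    x ∈ conjSub g H ↔ ∃ y ∈ H, g * y * g⁻¹ = x := by
  simp [conjSub, Subgroup.mem_map]

lemma conjSub_eq_iff {G : Type*} [Group G] {g : G} {H : Subgroup G} :
    conjSub g H = H ↔ g ∈ Subgroup.normalizer (H : Set G) := by
  rw [Subgroup.mem_normalizer_iff]
  constructor
  · intro h n
    constructor
    · intro hn
      rw [← h]
      exact mem_conjSub.mpr ⟨n, hn, rfl⟩
    · intro hn
      rw [← h] at hn
      obtain ⟨y, hy, hyeq⟩ := mem_conjSub.mp hn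
      have : y = n := mul_left_cancel (mul_right_cancel hyeq)
      rwa [this] at hy
  · intro h
    ext x
    rw [mem_conjSub]
    constructor
    · rintro ⟨y, hy, rfl⟩
      exact (h y).mp hy
    · intro hx
      refine ⟨g⁻¹ * x * g, (h _).mpr ?_, by group⟩
      have : g * (g⁻¹ * x * g) * g⁻¹ = x := by group
      rwa [this]

lemma conjSub_mono {G : Type*} [Group G] (g : G) {A B : Subgroup G} (h : A ≤ B) :
    conjSub g A ≤ conjSub g B := Subgroup.map_mono h

theorem stmt_8 {G : Type*} [Group G] {𝓚 𝓗 : Set (Subgroup G)}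
    (hK : AMColl 𝓚) (hH : AMColl 𝓗) (hKinv : ConjInv 𝓚) (hHinv : ConjInv 𝓗)
    (hrel : BlowRel 𝓚 𝓗)
    {Λ : Type*} (H : Λ → Subgroup G)
    (hHmem : ∀ l, H l ∈ 𝓗)
    (hHrep : ∀ P ∈ 𝓗, ∃ l, ∃ g : G, conjSub g (H l) = P)
    (hHdist : ∀ l l' : Λ, ∀ g : G, conjSub g (H l) = H l' → l = l')
    {Mi : Λ → Type*} (K : ∀ l, Mi l → Subgroup G)
    (hKmem : ∀ l m, K l m ∈ 𝓚)
    (hKle : ∀ l m, K l m ≤ H l)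
    (hKrep : ∀ l, ∀ P ∈ 𝓚, P ≤ H l → ∃ m, ∃ h ∈ H l, conjSub h (K l m) = P)
    (hKdist : ∀ l, ∀ m m' : Mi l, ∀ h ∈ H l, conjSub h (K l m) = K l m' → m = m')
    {l l' : Λ} {m : Mi l} {m' : Mi l'} {g : G}
    (hconj : conjSub g (K l m) = K l' m') :
    l = l' ∧ HEq m m' ∧ g ∈ K l m := by
  -- conjSub g (H l) and H l' both contain the infinite K l' m'
  have hKinf : ((K l' m' : Set G)).Infinite := hK.1 _ (hKmem l' m')
  have h1 : K l' m' ≤ conjSub g (H l) := hconj ▸ conjSub_mono g (hKle l m)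
  have h2 : K l' m' ≤ H l' := hKle l' m'
  have heqH : conjSub g (H l) = H l' := by
    by_contra hne
    exact hKinf ((hH.2.1 _ (hHinv _ (hHmem l) g) _ (hHmem l') hne).subset
      (fun x hx => ⟨h1 hx, h2 hx⟩))
  have hl : l = l' := hHdist l l' g heqH
  subst hl
  have hgH : g ∈ H l := by
    rw [← hH.2.2 _ (hHmem l)]
    exact conjSub_eq_iff.mp heqH
  have hm : m = m' := hKdist l m m' g hgH hconj
  subst hm
  have hgK : g ∈ K l m := by
    rw [← hK.2.2 _ (hKmem l m)]
    exact conjSub_eq_iff.mp hconj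
  exact ⟨rfl, HEq.rfl, hgK⟩
end

section
/- Let G be a virtually infinite cyclic group and K its maximal finite normal subgroup. Then G/K is isomorphic to ℤ or to the infinite dihedral group ℤ/2 * ℤ/2. -/
open scoped Pointwise

open Subgroup
open scoped commutatorElement

lemma finite_commSet (G : Type*) [Group G] [(center G).FiniteIndex] :
    Finite (commutatorSet G) := by
  have hwd : ∀ (g h g' h' : G), g⁻¹ * g' ∈ center G → h⁻¹ * h' ∈ center G →
      ⁅g, h⁆ = ⁅g', h'⁆ := by
    intro g h g' h' hg hh
    obtain ⟨z, hz, rfl⟩ : ∃ z ∈ center G, g' = g * z :=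
      ⟨g⁻¹ * g', hg, by group⟩
    obtain ⟨w, hw, rfl⟩ : ∃ w ∈ center G, h' = h * w :=
      ⟨h⁻¹ * h', hh, by group⟩
    rw [mem_center_iff] at hz hw
    have hz' : ∀ x : G, x * z⁻¹ = z⁻¹ * x := fun x => by
      rw [← inv_inv x, ← mul_inv_rev, ← hz x⁻¹, mul_inv_rev, inv_inv]
    have hw' : ∀ x : G, x * w⁻¹ = w⁻¹ * x := fun x => by
      rw [← inv_inv x, ← mul_inv_rev, ← hw x⁻¹, mul_inv_rev, inv_inv]
    have hz'' : ∀ x y : G, x * (z⁻¹ * y) = z⁻¹ * (x * y) := fun x y => by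
      rw [← mul_assoc, hz' x, mul_assoc]
    have hw'' : ∀ x y : G, x * (w⁻¹ * y) = w⁻¹ * (x * y) := fun x y => by
      rw [← mul_assoc, hw' x, mul_assoc]
    simp only [commutatorElement_def, mul_inv_rev, mul_assoc, hz, hw]
    simp only [hz'', inv_mul_cancel_left, mul_inv_cancel_left]
    rw [hw' h⁻¹]
    simp only [hw'', inv_mul_cancel_left, mul_inv_cancel_left]
  let f : G ⧸ center G → G ⧸ center G → G :=
    Quotient.lift₂ (fun g h => ⁅g, h⁆) (by
      intro a₁ a₂ b₁ b₂ h1 h2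
      exact hwd _ _ _ _ ((QuotientGroup.leftRel_apply).mp h1)
        ((QuotientGroup.leftRel_apply).mp h2))
  have : commutatorSet G ⊆ Set.range (fun p : (G ⧸ center G) × (G ⧸ center G) => f p.1 p.2) := by
    rintro x ⟨g, h, rfl⟩
    exact ⟨(QuotientGroup.mk g, QuotientGroup.mk h), rfl⟩
  exact (Set.finite_range _).subset this

section Helpers
variable {Q : Type*} [Group Q]

lemma nontorsion_zpow {g : Q} (hg : ¬ IsOfFinOrder g) {n : ℤ} (hn : n ≠ 0) :
    ¬ IsOfFinOrder (g ^ n) := by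
  intro h
  obtain ⟨m, hm, hm1⟩ := isOfFinOrder_iff_zpow_eq_one.mp h
  exact hg (isOfFinOrder_iff_zpow_eq_one.mpr ⟨n * m, mul_ne_zero hn hm, by
    rw [zpow_mul]; exact hm1⟩)

lemma zpowers_isCyclic (g : Q) : IsCyclic ↥(Subgroup.zpowers g) := by
  refine ⟨⟨⟨g, mem_zpowers g⟩, fun x => ?_⟩⟩
  obtain ⟨k, hk⟩ := mem_zpowers_iff.mp x.2
  exact mem_zpowers_iff.mpr ⟨k, by ext; simpa using hk⟩

lemma eq_zpowers_of_generator {H : Subgroup Q} (c : ↥H)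
    (h : ∀ x : ↥H, x ∈ Subgroup.zpowers c) : H = Subgroup.zpowers (c : Q) := by
  refine le_antisymm (fun x hx => ?_) ((zpowers_le).mpr c.2)
  obtain ⟨k, hk⟩ := mem_zpowers_iff.mp (h ⟨x, hx⟩)
  exact mem_zpowers_iff.mpr ⟨k, by simpa using congrArg Subtype.val hk⟩

lemma conj_pm {a : Q} (hN : (Subgroup.zpowers a).Normal) (ha : ¬ IsOfFinOrder a) (q : Q) :
    q * a * q⁻¹ = a ∨ q * a * q⁻¹ = a⁻¹ := by
  have hinj : Function.Injective fun n : ℤ => a ^ n :=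
    injective_zpow_iff_not_isOfFinOrder.mpr ha
  obtain ⟨m, hm⟩ := mem_zpowers_iff.mp (hN.conj_mem a (mem_zpowers a) q)
  obtain ⟨n, hn⟩ := mem_zpowers_iff.mp (hN.conj_mem a (mem_zpowers a) q⁻¹)
  have key : a ^ (n * m) = a ^ (1 : ℤ) := by
    rw [zpow_mul, hn, conj_zpow, hm]
    group
  rcases Int.eq_one_or_neg_one_of_mul_eq_one' (hinj key) with ⟨_, h1⟩ | ⟨_, h1⟩
  · left; rw [← hm, h1, zpow_one]
  · right; rw [← hm, h1, zpow_neg_one]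
end Helpers

section Cent
variable {Q : Type*} [Group Q] {a : Q}

lemma mem_cent_iff (x : Q) : x ∈ Subgroup.centralizer {a} ↔ a * x = x * a := by
  simp [Subgroup.mem_centralizer_iff]

lemma cent_normal (hN : (Subgroup.zpowers a).Normal) (ha : ¬ IsOfFinOrder a) :
    (Subgroup.centralizer {a} : Subgroup Q).Normal := by
  constructor
  intro x hx q
  rw [mem_cent_iff] at hx ⊢
  have hcom : Commute a x := hx
  have hq : q⁻¹ * a * q = a ∨ q⁻¹ * a * q = a⁻¹ := by
    simpa using conj_pm hN ha q⁻¹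
  have this : q⁻¹ * a * q * x = x * (q⁻¹ * a * q) := by
    rcases hq with h | h
    · rw [h]; exact hcom.eq
    · rw [h]; exact hcom.inv_left.eq
  calc a * (q * x * q⁻¹) = q * (q⁻¹ * a * q * x) * q⁻¹ := by group
    _ = q * (x * (q⁻¹ * a * q)) * q⁻¹ := by rw [this]
    _ = q * x * q⁻¹ * a := by group

lemma not_mem_cent_conj (hN : (Subgroup.zpowers a).Normal) (ha : ¬ IsOfFinOrder a)
    {t : Q} (ht : t ∉ Subgroup.centralizer {a}) : t * a * t⁻¹ = a⁻¹ := by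
  rcases conj_pm hN ha t with h | h
  · exact absurd ((mem_cent_iff t).mpr (mul_inv_eq_iff_eq_mul.mp h).symm) ht
  · exact h

lemma conj_back {z : Q} (hz : z * a * z⁻¹ = a⁻¹) : a = z⁻¹ * a⁻¹ * z := by
  rw [← hz]; group

lemma index_two (hN : (Subgroup.zpowers a).Normal) (ha : ¬ IsOfFinOrder a)
    {x y : Q} (hx : x ∉ Subgroup.centralizer {a}) (hy : y ∉ Subgroup.centralizer {a}) :
    x⁻¹ * y ∈ Subgroup.centralizer {a} := by
  have hx' := conj_back (not_mem_cent_conj hN ha hx)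
  have hy' := not_mem_cent_conj hN ha hy
  rw [mem_cent_iff]
  have key : (x⁻¹ * y) * a * (x⁻¹ * y)⁻¹ = a :=
    calc (x⁻¹ * y) * a * (x⁻¹ * y)⁻¹ = x⁻¹ * (y * a * y⁻¹) * x := by group
      _ = x⁻¹ * a⁻¹ * x := by rw [hy']
      _ = a := hx'.symm
  exact (mul_inv_eq_iff_eq_mul.mp key).symm
end Cent

lemma cent_cyclic {Q : Type*} [Group Q]
    (htriv : ∀ K' : Subgroup Q, K'.Normal → (K' : Set Q).Finite → K' = ⊥)
    {a : Q} (hN : (Subgroup.zpowers a).Normal) (hfi : (Subgroup.zpowers a).FiniteIndex)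
    (ha : ¬ IsOfFinOrder a) :
    ∃ c : Q, ¬ IsOfFinOrder c ∧ Subgroup.centralizer {a} = Subgroup.zpowers c := by
  classical
  set C := Subgroup.centralizer ({a} : Set Q) with hCdef
  haveI hCn : C.Normal := cent_normal hN ha
  have haC : a ∈ C := (mem_cent_iff a).mpr rfl
  have hcomm_a : ∀ y : ↥C, Commute a (y : Q) := fun y => (mem_cent_iff _).mp y.2
  haveI := hfi
  -- the center of C has finite index in C
  have hsub : (Subgroup.zpowers a).subgroupOf C ≤ Subgroup.center ↥C := by
    intro x hx
    rw [Subgroup.mem_center_iff]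
    intro y
    obtain ⟨k, hk⟩ := mem_zpowers_iff.mp ((Subgroup.mem_subgroupOf).mp hx)
    ext
    push_cast
    have : Commute (a ^ k) (y : Q) := (hcomm_a y).zpow_left k
    rw [hk] at this
    exact this.symm.eq
  haveI : ((Subgroup.zpowers a).subgroupOf C).FiniteIndex := inferInstance
  haveI : (Subgroup.center ↥C).FiniteIndex := Subgroup.finiteIndex_of_le hsub
  haveI := finite_commSet ↥C
  haveI : Finite (_root_.commutator ↥C) := inferInstance
  -- the commutator subgroup of C is a finite normal subgroup of Q, hence trivial
  have hD : ((_root_.commutator ↥C).map C.subtype) = ⊥ := by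
    refine htriv _ inferInstance ?_
    rw [Subgroup.coe_map]
    exact (Set.toFinite _).image _
  rw [Subgroup.map_eq_bot_iff_of_injective _ (Subgroup.subtype_injective C)] at hD
  have hab : ∀ x y : ↥C, x * y = y * x := by
    intro x y
    have h1 : ⁅x, y⁆ ∈ _root_.commutator ↥C :=
      Subgroup.commutator_mem_commutator (Subgroup.mem_top x) (Subgroup.mem_top y)
    rw [hD, Subgroup.mem_bot] at h1
    exact commutatorElement_eq_one_iff_mul_comm.mp h1
  have hcomm : ∀ {x y : Q}, x ∈ C → y ∈ C → Commute x y := by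
    intro x y hx hy
    have := congrArg Subtype.val (hab ⟨x, hx⟩ ⟨y, hy⟩)
    push_cast at this
    exact this
  -- the torsion subgroup of C is a finite normal subgroup of Q, hence trivial
  set T : Subgroup Q :=
    { carrier := {x : Q | x ∈ C ∧ IsOfFinOrder x}
      one_mem' := ⟨C.one_mem, IsOfFinOrder.one⟩
      mul_mem' := fun {x y} hx hy =>
        ⟨C.mul_mem hx.1 hy.1, (hcomm hx.1 hy.1).isOfFinOrder_mul hx.2 hy.2⟩
      inv_mem' := fun {x} hx => ⟨C.inv_mem hx.1, hx.2.inv⟩ } with hTdef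
  have hTnorm : T.Normal := by
    constructor
    intro x hx q
    exact ⟨hCn.conj_mem x hx.1 q, by
      simpa using ((MulAut.conj q).toMonoidHom.isOfFinOrder hx.2)⟩
  haveI : Finite (Q ⧸ Subgroup.zpowers a) := inferInstance
  have hTinj : Function.Injective
      (fun x : ↥T => (QuotientGroup.mk (x : Q) : Q ⧸ Subgroup.zpowers a)) := by
    intro x y h
    obtain ⟨k, hk⟩ := mem_zpowers_iff.mp (QuotientGroup.eq.mp h)
    have hk0 : k = 0 := by
      by_contra hk0
      refine nontorsion_zpow ha hk0 ?_
      rw [hk]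
      exact ((hcomm x.2.1 y.2.1).inv_left).isOfFinOrder_mul x.2.2.inv y.2.2
    rw [hk0, zpow_zero] at hk
    exact Subtype.ext (inv_mul_eq_one.mp hk.symm)
  haveI : Finite ↥T := Finite.of_injective _ hTinj
  have hT : T = ⊥ := htriv T hTnorm (Set.toFinite _)
  have htf : ∀ x : ↥C, IsOfFinOrder (x : Q) → x = 1 := by
    intro x hx
    have : (x : Q) ∈ T := ⟨x.2, hx⟩
    rw [hT, Subgroup.mem_bot] at this
    exact Subtype.ext this
  -- the power map embeds C into the cyclic group ⟨a⟩
  set m := (Subgroup.zpowers a).index with hmdef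
  have hm : m ≠ 0 := hfi.index_ne_zero
  set ψ : ↥C →* Q :=
    { toFun := fun x => (x : Q) ^ m
      map_one' := one_pow m
      map_mul' := by
        intro x y
        push_cast
        exact (hcomm x.2 y.2).mul_pow m } with hψdef
  have hψinj : Function.Injective ψ := by
    refine (injective_iff_map_eq_one ψ).mpr ?_
    intro x hx1
    exact htf x (isOfFinOrder_iff_pow_eq_one.mpr ⟨m, Nat.pos_of_ne_zero hm, hx1⟩)
  have hrange : ∀ x : ↥C, ψ x ∈ Subgroup.zpowers a := fun x =>
    (Subgroup.zpowers a).pow_index_mem (x : Q)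
  set ψ' : ↥C →* ↥(Subgroup.zpowers a) := ψ.codRestrict _ hrange with hψ'def
  have hψ'inj : Function.Injective ψ' := fun x y h => hψinj (congrArg Subtype.val h)
  haveI := zpowers_isCyclic a
  haveI : IsCyclic ↥C := by
    haveI : IsCyclic ψ'.range := Subgroup.isCyclic _
    exact isCyclic_of_surjective _ (MulEquiv.symm (MonoidHom.ofInjective hψ'inj)).surjective
  obtain ⟨c', hc'⟩ := IsCyclic.exists_generator (α := ↥C)
  have hCc : C = Subgroup.zpowers (c' : Q) := eq_zpowers_of_generator c' hc'
  refine ⟨c', ?_, hCc⟩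
  intro hcfin
  obtain ⟨j, hj⟩ := mem_zpowers_iff.mp (hCc ▸ haC)
  exact ha (hj ▸ hcfin.zpow)

lemma key_lemma {Q : Type*} [Group Q]
    (g : Q) (hg : ¬ IsOfFinOrder g) (hgfi : (Subgroup.zpowers g).FiniteIndex)
    (htriv : ∀ K' : Subgroup Q, K'.Normal → (K' : Set Q).Finite → K' = ⊥) :
    Nonempty (Q ≃* Multiplicative ℤ) ∨ Nonempty (Q ≃* DihedralGroup 0) := by
  classical
  haveI := hgfi
  set N₀ := (Subgroup.zpowers g).normalCore with hN₀def
  haveI : N₀.Normal := Subgroup.normalCore_normal _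
  haveI : N₀.FiniteIndex := inferInstance
  haveI : Finite (Q ⧸ N₀) := inferInstance
  obtain ⟨i, j, hij, hmk⟩ := Finite.exists_ne_map_eq_of_infinite
    (fun n : ℤ => (QuotientGroup.mk (g ^ n) : Q ⧸ N₀))
  have hbmem : g ^ (-i + j) ∈ N₀ := by
    have := QuotientGroup.eq.mp hmk
    rwa [← zpow_neg, ← zpow_add] at this
  have hne : (-i + j) ≠ 0 := fun h => hij (by omega)
  have hle : N₀ ≤ Subgroup.zpowers g := Subgroup.normalCore_le _
  haveI := zpowers_isCyclic g
  haveI : IsCyclic ↥(N₀.subgroupOf (Subgroup.zpowers g)) := Subgroup.isCyclic _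
  haveI : IsCyclic ↥N₀ :=
    isCyclic_of_surjective _ (Subgroup.subgroupOfEquivOfLe hle).surjective
  obtain ⟨a', ha'⟩ := IsCyclic.exists_generator (α := ↥N₀)
  have hN₀ : N₀ = Subgroup.zpowers (a' : Q) := eq_zpowers_of_generator a' ha'
  set a := (a' : Q) with hadef
  have ha : ¬ IsOfFinOrder a := by
    intro h
    obtain ⟨k, hk⟩ := mem_zpowers_iff.mp (hN₀ ▸ hbmem)
    exact nontorsion_zpow hg hne (hk ▸ h.zpow)
  have hNa : (Subgroup.zpowers a).Normal := hN₀ ▸ ‹N₀.Normal›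
  have hfia : (Subgroup.zpowers a).FiniteIndex := hN₀ ▸ inferInstance
  obtain ⟨c, hc, hC⟩ := cent_cyclic htriv hNa hfia ha
  have hinjc : Function.Injective fun n : ℤ => c ^ n :=
    injective_zpow_iff_not_isOfFinOrder.mpr hc
  by_cases hCtop : Subgroup.centralizer ({a} : Set Q) = ⊤
  · left
    have htop : ∀ x : Q, x ∈ Subgroup.zpowers c := by
      rw [← hC, hCtop]; exact fun x => Subgroup.mem_top x
    set e : Multiplicative ℤ →* Q := zpowersHom Q c with hedef
    have hbij : Function.Bijective e := by
      constructor
      · refine (injective_iff_map_eq_one e).mpr ?_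
        intro n hn
        have : c ^ (Multiplicative.toAdd n) = c ^ (0 : ℤ) := by
          rw [zpow_zero]; exact hn
        have := hinjc this
        simpa using this
      · intro x
        obtain ⟨k, hk⟩ := mem_zpowers_iff.mp (htop x)
        exact ⟨Multiplicative.ofAdd k, hk⟩
    exact ⟨(MulEquiv.ofBijective e hbij).symm⟩
  · right
    obtain ⟨t, ht⟩ : ∃ t, t ∉ Subgroup.centralizer ({a} : Set Q) := by
      by_contra h
      push_neg at h
      exact hCtop ((Subgroup.eq_top_iff' _).mpr h)
    have htat : t * a * t⁻¹ = a⁻¹ := not_mem_cent_conj hNa ha ht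
    have hac : a ∈ Subgroup.zpowers c := hC ▸ (mem_cent_iff a).mpr rfl
    obtain ⟨j0, hj0⟩ := mem_zpowers_iff.mp hac
    have hj00 : j0 ≠ 0 := by
      intro h
      rw [h, zpow_zero] at hj0
      exact ha (hj0 ▸ IsOfFinOrder.one)
    have hcC : c ∈ Subgroup.centralizer ({a} : Set Q) := by
      rw [hC]; exact Subgroup.mem_zpowers c
    have hctc : t * c * t⁻¹ ∈ Subgroup.zpowers c := by
      rw [← hC]
      exact (cent_normal hNa ha).conj_mem _ hcC t
    obtain ⟨k, hk⟩ := mem_zpowers_iff.mp hctc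
    have hkj : c ^ (k * j0) = c ^ (-j0) := by
      rw [zpow_mul, hk, conj_zpow, hj0, htat, zpow_neg, hj0]
    have hk1 : k = -1 := by
      have h2 := hinjc hkj
      have : k * j0 = -1 * j0 := by omega
      exact mul_right_cancel₀ hj00 this
    have htct : t * c * t⁻¹ = c⁻¹ := by rw [← hk, hk1, zpow_neg_one]
    have hconj : ∀ i : ℤ, t * c ^ i * t⁻¹ = c ^ (-i) := by
      intro i
      rw [← conj_zpow, htct, inv_zpow, ← zpow_neg]
    have ht2mem : t * t ∈ Subgroup.centralizer ({a} : Set Q) := by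
      rw [mem_cent_iff]
      have hkey : (t*t) * a * (t*t)⁻¹ = a :=
        calc (t*t)*a*(t*t)⁻¹ = t*(t*a*t⁻¹)*t⁻¹ := by group
          _ = t*a⁻¹*t⁻¹ := by rw [htat]
          _ = a := by rw [show t*a⁻¹*t⁻¹ = (t*a*t⁻¹)⁻¹ by group, htat, inv_inv]
      exact (mul_inv_eq_iff_eq_mul.mp hkey).symm
    obtain ⟨i0, hi0⟩ := mem_zpowers_iff.mp (hC ▸ ht2mem)
    have hi00 : i0 = 0 := by
      have h3 : c ^ (-i0) = c ^ i0 := by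
        calc c ^ (-i0) = t * c ^ i0 * t⁻¹ := (hconj i0).symm
          _ = t * (t * t) * t⁻¹ := by rw [hi0]
          _ = t * t := by group
          _ = c ^ i0 := hi0.symm
      have := hinjc h3
      omega
    have ht2 : t * t = 1 := by rw [← hi0, hi00, zpow_zero]
    have htinv : t⁻¹ = t := inv_eq_of_mul_eq_one_right ht2
    -- construct the isomorphism with the infinite dihedral group
    set ι : ZMod 0 → ℤ := fun n => n with hιdef
    have hι_add : ∀ i j : ZMod 0, ι (i + j) = ι i + ι j := fun _ _ => rfl
    have hι_sub : ∀ i j : ZMod 0, ι (i - j) = ι i - ι j := fun _ _ => rfl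
    set f0 : DihedralGroup 0 → Q := fun x => match x with
      | DihedralGroup.r i => c ^ ι i
      | DihedralGroup.sr i => t * c ^ ι i
      with hf0def
    have hf0r : ∀ i : ZMod 0, f0 (DihedralGroup.r i) = c ^ ι i := fun _ => rfl
    have hf0sr : ∀ i : ZMod 0, f0 (DihedralGroup.sr i) = t * c ^ ι i := fun _ => rfl
    have hmul : ∀ x y : DihedralGroup 0, f0 (x * y) = f0 x * f0 y := by
      rintro (i | i) (j | j)
      · rw [DihedralGroup.r_mul_r, hf0r, hf0r, hf0r, hι_add, zpow_add]
      · rw [DihedralGroup.r_mul_sr, hf0sr, hf0r, hf0sr, hι_sub]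
        calc t * c ^ (ι j - ι i) = t * (c ^ (-ι i) * c ^ ι j) := by
              rw [← zpow_add]; ring_nf
          _ = (t * c ^ (-ι i) * t⁻¹) * (t * c ^ ι j) := by group
          _ = c ^ ι i * (t * c ^ ι j) := by rw [hconj, neg_neg]
      · rw [DihedralGroup.sr_mul_r, hf0sr, hf0sr, hf0r, hι_add, zpow_add, mul_assoc]
      · rw [DihedralGroup.sr_mul_sr, hf0r, hf0sr, hf0sr, hι_sub]
        calc c ^ (ι j - ι i) = c ^ (-ι i) * c ^ ι j := by rw [← zpow_add]; ring_nf
          _ = (t * c ^ ι i * t⁻¹) * c ^ ι j := by rw [hconj]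
          _ = t * c ^ ι i * (t * c ^ ι j) := by rw [htinv]; group
    set f : DihedralGroup 0 →* Q := MonoidHom.mk' f0 hmul with hfdef
    have hfr : ∀ i : ZMod 0, f (DihedralGroup.r i) = c ^ ι i := fun _ => rfl
    have hfsr : ∀ i : ZMod 0, f (DihedralGroup.sr i) = t * c ^ ι i := fun _ => rfl
    have hbij : Function.Bijective f := by
      constructor
      · refine (injective_iff_map_eq_one f).mpr ?_
        rintro (i | i) h1
        · rw [hfr] at h1
          have : c ^ ι i = c ^ (0 : ℤ) := by rw [zpow_zero]; exact h1
          have hi := hinjc this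
          rw [DihedralGroup.one_def]
          exact congrArg DihedralGroup.r hi
        · exfalso
          rw [hfsr] at h1
          have : t = c ^ (-ι i) := by
            rw [zpow_neg]
            exact eq_inv_of_mul_eq_one_left h1
          apply ht
          rw [hC, this]
          exact Subgroup.zpow_mem _ (Subgroup.mem_zpowers c) _
      · intro x
        by_cases hx : x ∈ Subgroup.centralizer ({a} : Set Q)
        · rw [hC] at hx
          obtain ⟨k, hk⟩ := mem_zpowers_iff.mp hx
          exact ⟨DihedralGroup.r k, (hfr k).trans hk⟩
        · have hmem := index_two hNa ha ht hx
          rw [hC] at hmem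
          obtain ⟨k, hk⟩ := mem_zpowers_iff.mp hmem
          refine ⟨DihedralGroup.sr k, ?_⟩
          refine (hfsr k).trans ?_
          show t * c ^ k = x
          rw [hk]
          group
    exact ⟨(MulEquiv.ofBijective f hbij).symm⟩


theorem stmt_10 {G : Type*} [Group G] (hvc : VirtuallyInfCyclic G)
    (K : Subgroup G) [K.Normal] (hKfin : (K : Set G).Finite)
    (hKmax : ∀ K' : Subgroup G, K'.Normal → (K' : Set G).Finite → K' ≤ K) :
    Nonempty ((G ⧸ K) ≃* Multiplicative ℤ) ∨
      Nonempty ((G ⧸ K) ≃* DihedralGroup 0) := by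
  obtain ⟨g, hg, hfi⟩ := hvc
  set π : G →* G ⧸ K := QuotientGroup.mk' K with hπdef
  have hπs : Function.Surjective π := QuotientGroup.mk'_surjective K
  haveI : Finite ↥K := hKfin.to_subtype
  have hg' : ¬ IsOfFinOrder (π g) := by
    intro h
    obtain ⟨n, hn, h1⟩ := isOfFinOrder_iff_pow_eq_one.mp h
    have hgn : g ^ n ∈ K := by
      rwa [← map_pow, ← MonoidHom.mem_ker, QuotientGroup.ker_mk'] at h1
    have hfo : IsOfFinOrder (g ^ n) := by
      obtain ⟨m, hm, hm1⟩ := isOfFinOrder_iff_pow_eq_one.mp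
        (isOfFinOrder_of_finite (⟨g ^ n, hgn⟩ : ↥K))
      refine isOfFinOrder_iff_pow_eq_one.mpr ⟨m, hm, ?_⟩
      have := congrArg Subtype.val hm1
      push_cast at this
      exact this
    refine nontorsion_zpow hg (n := (n : ℤ)) (Int.natCast_ne_zero.mpr hn.ne') ?_
    rwa [zpow_natCast]
  have hfi' : (Subgroup.zpowers (π g)).FiniteIndex := by
    rw [← MonoidHom.map_zpowers]
    exact ⟨ne_zero_of_dvd_ne_zero hfi.index_ne_zero ((Subgroup.zpowers g).index_map_dvd hπs)⟩
  have htriv : ∀ K' : Subgroup (G ⧸ K), K'.Normal → (K' : Set (G ⧸ K)).Finite → K' = ⊥ := by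
    intro K' hN hF
    have hcomapN : (K'.comap π).Normal := hN.comap π
    have hcomapF : ((K'.comap π : Subgroup G) : Set G).Finite := by
      have hpre : ((K'.comap π : Subgroup G) : Set G) = π ⁻¹' (K' : Set (G ⧸ K)) := rfl
      rw [hpre, show π ⁻¹' (K' : Set (G ⧸ K)) =
        ⋃ q ∈ (K' : Set (G ⧸ K)), π ⁻¹' {q} by ext x; simp]
      refine Set.Finite.biUnion hF ?_
      intro q _
      obtain ⟨x0, rfl⟩ := hπs q
      have hfib : π ⁻¹' {π x0} = (fun k => x0 * k) '' (K : Set G) := by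
        ext y
        simp only [Set.mem_preimage, Set.mem_singleton_iff, Set.mem_image, SetLike.mem_coe]
        constructor
        · intro h
          refine ⟨x0⁻¹ * y, ?_, by group⟩
          have := QuotientGroup.eq.mp h.symm
          exact this
        · rintro ⟨k, hk, rfl⟩
          exact (QuotientGroup.eq.mpr (by simpa using hk)).symm
      rw [hfib]
      exact hKfin.image _
    have hle : K'.comap π ≤ K := hKmax _ hcomapN hcomapF
    have heq : K' = (K'.comap π).map π :=
      (Subgroup.map_comap_eq_self_of_surjective hπs K').symm
    have hmap : (K'.comap π).map π ≤ K.map π := Subgroup.map_mono hle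
    have hKbot : K.map π = ⊥ := by
      rw [Subgroup.map_eq_bot_iff, hπdef, QuotientGroup.ker_mk']
    rw [heq]
    exact le_bot_iff.mp (hKbot ▸ hmap)
  exact key_lemma (π g) hg' hfi' htriv
end

section
/- Let G = *_{l∈ℕ} G_l be a free product of infinitely many infinite groups. There is no conjugacy-invariant collection 𝓚 of infinite subgroups of G with finitely many conjugacy classes such that for every m ∈ ℕ, some member of 𝓚 is contained in Z_m = *_{l>m} G_l. -/
open scoped Pointwise

/-- The subgroup of the free product `*_{k} G k` generated by the factors
indexed by `S`. -/
def factorJoin {ι : Type*} (G : ι → Type*) [∀ i, Group (G i)] (S : Set ι) :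
    Subgroup (Monoid.CoprodI G) :=
  ⨆ k ∈ S, (Monoid.CoprodI.of (M := G) (i := k)).range


/-- Retraction of the free product killing factors of index `> m`. -/
def retr (G : ℕ → Type*) [∀ l, Group (G l)] (m : ℕ) :
    Monoid.CoprodI G →* Monoid.CoprodI G :=
  Monoid.CoprodI.lift fun l => if l ≤ m then Monoid.CoprodI.of else 1

theorem retr_of_le (G : ℕ → Type*) [∀ l, Group (G l)] {m l : ℕ} (h : l ≤ m) (a : G l) :
    retr G m (Monoid.CoprodI.of a) = Monoid.CoprodI.of a := by
  simp [retr, Monoid.CoprodI.lift_of, if_pos h]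

theorem retr_of_gt (G : ℕ → Type*) [∀ l, Group (G l)] {m l : ℕ} (h : m < l) (a : G l) :
    retr G m (Monoid.CoprodI.of a) = 1 := by
  simp [retr, Monoid.CoprodI.lift_of, if_neg (not_le.mpr h)]

theorem retr_fix (G : ℕ → Type*) [∀ l, Group (G l)] (x : Monoid.CoprodI G) :
    ∃ m : ℕ, ∀ n, m ≤ n → retr G n x = x := by
  induction x using Monoid.CoprodI.induction_on with
  | one => exact ⟨0, fun n _ => map_one _⟩
  | of i a => exact ⟨i, fun n hn => retr_of_le G hn a⟩
  | mul x y hx hy =>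
      obtain ⟨m1, h1⟩ := hx
      obtain ⟨m2, h2⟩ := hy
      exact ⟨max m1 m2, fun n hn => by
        rw [map_mul, h1 n (le_trans (le_max_left _ _) hn),
          h2 n (le_trans (le_max_right _ _) hn)]⟩

theorem factorJoin_le_ker (G : ℕ → Type*) [∀ l, Group (G l)] (m : ℕ) :
    factorJoin G {l | m < l} ≤ (retr G m).ker := by
  refine iSup_le fun k => iSup_le fun hk => ?_
  rintro x ⟨a, rfl⟩
  exact retr_of_gt G hk a

theorem stmt_15 (G : ℕ → Type*) [∀ l, Group (G l)]
    (hinf : ∀ l, (Set.univ : Set (G l)).Infinite) :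
    ¬ ∃ 𝓚 : Set (Subgroup (Monoid.CoprodI G)),
        ConjInv 𝓚 ∧
        (∀ K ∈ 𝓚, (K : Set (Monoid.CoprodI G)).Infinite) ∧
        (∃ T : Set (Subgroup (Monoid.CoprodI G)), T.Finite ∧ T ⊆ 𝓚 ∧
          ∀ K ∈ 𝓚, ∃ K' ∈ T, ∃ g : Monoid.CoprodI G, conjSub g K' = K) ∧
        ∀ m : ℕ, ∃ K ∈ 𝓚, K ≤ factorJoin G {l | m < l} := by
  rintro ⟨𝓚, hconj, hKinf, ⟨T, hTfin, hT𝓚, hrep⟩, hZ⟩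
  have key : ∀ K' ∈ T, ∃ m : ℕ, ∃ x ∈ K', x ≠ 1 ∧ ∀ n, m ≤ n → retr G n x = x := by
    intro K' hK'
    obtain ⟨x, hxK, hx1⟩ :=
      (hKinf K' (hT𝓚 hK')).exists_notMem_finite (Set.finite_singleton 1)
    obtain ⟨m, hm⟩ := retr_fix G x
    exact ⟨m, x, hxK, by simpa using hx1, hm⟩
  choose! f hf using key
  set M : ℕ := hTfin.toFinset.sup f with hM
  obtain ⟨K, hK𝓚, hKle⟩ := hZ M
  obtain ⟨K', hK'T, g, rfl⟩ := hrep K hK𝓚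
  obtain ⟨x, hxK', hx1, hxfix⟩ := hf K' hK'T
  have hfle : f K' ≤ M := Finset.le_sup (hTfin.mem_toFinset.mpr hK'T)
  have hconjmem : g * x * g⁻¹ ∈ conjSub g K' := ⟨x, hxK', rfl⟩
  have hker : retr G M (g * x * g⁻¹) = 1 := factorJoin_le_ker G M (hKle hconjmem)
  rw [map_mul, map_mul, map_inv, hxfix M hfle] at hker
  apply hx1
  have := congrArg (fun z => (retr G M g)⁻¹ * z * retr G M g) hker
  simpa [mul_assoc] using this
end
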